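/- Let (X_i,Z_i) and (X_j,Z_j) be two independent, identically distributed random pairs with values in {0,1}² and common joint pmf ψ; write p_{10} = ψ(1,0), p_{11} = ψ(1,1), p^Z = ψ(0,1)+ψ(1,1), and assume 0 < p^Z < 1. Then the conditional covariance of X_i and X_j given the event Z_i ≠ Z_j equals −(p_{11}(1−p^Z) − p_{10}·p^Z)² / (2·p^Z·(1−p^Z))²; in particular it is nonpositive. -/
import Mathlib


open Finset

/-- Let `(X_i, Z_i)` and `(X_j, Z_j)` be two independent,
identically distributed random pairs with values in `{0,1}²` and common joint pmf
`ψ`; write `p₁₀ = ψ(1,0)`, `p₁₁ = ψ(1,1)`, `p^Z = ψ(0,1) + ψ(1,1)`, and assume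
`0 < p^Z < 1`.  Then the conditional covariance of `X_i` and `X_j` given the event
`Z_i ≠ Z_j` (which has probability `Pneq = 2p^Z(1-p^Z) > 0`) equals
`-(p₁₁(1-p^Z) - p₁₀·p^Z)² / (2p^Z(1-p^Z))²`; in particular it is nonpositive.

Here `P(X_i = 1, X_j = 1, Z_i ≠ Z_j) = ∑ z, ψ(1,z)·ψ(1,!z)` and
`P(X_i = 1, Z_i ≠ Z_j) = ∑ z, ψ(1,z)·(∑ x, ψ(x,!z))`, and the conditional covariance
is `P(X_i=1, X_j=1 | E) - P(X_i=1 | E)·P(X_j=1 | E)`. -/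
theorem cond_cov_odd
    (ψ : Bool → Bool → ℝ)
    (hpos : ∀ x z, 0 ≤ ψ x z)
    (hsum : ∑ x : Bool, ∑ z : Bool, ψ x z = 1)
    (p10 p11 pZ Pneq : ℝ)
    (hp10 : p10 = ψ true false)
    (hp11 : p11 = ψ true true)
    (hpZ : pZ = ψ false true + ψ true true)
    (hPneq : Pneq = ∑ x : Bool, ∑ y : Bool, ∑ z : Bool, ψ x z * ψ y (!z))
    (hpZ0 : 0 < pZ) (hpZ1 : pZ < 1) :
    (∑ z : Bool, ψ true z * ψ true (!z)) / Pneq -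
        ((∑ z : Bool, ψ true z * (∑ x : Bool, ψ x (!z))) / Pneq) *
          ((∑ z : Bool, (∑ x : Bool, ψ x z) * ψ true (!z)) / Pneq) =
      -((p11 * (1 - pZ) - p10 * pZ) ^ 2) / (2 * pZ * (1 - pZ)) ^ 2 ∧
    (∑ z : Bool, ψ true z * ψ true (!z)) / Pneq -
        ((∑ z : Bool, ψ true z * (∑ x : Bool, ψ x (!z))) / Pneq) *
          ((∑ z : Bool, (∑ x : Bool, ψ x z) * ψ true (!z)) / Pneq) ≤ 0 := by
  simp only [Fintype.sum_bool, Bool.not_true, Bool.not_false] at *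
  have hP : Pneq = 2 * pZ * (1 - pZ) := by
    rw [hPneq]; nlinarith [hsum]
  have hq : ψ true true + ψ false true = pZ := by linarith
  have h1 : ψ true false + ψ false false = 1 - pZ := by linarith
  have hq0 : pZ ≠ 0 := ne_of_gt hpZ0
  have hq1 : (1 : ℝ) - pZ ≠ 0 := by linarith
  have main : (ψ true true * ψ true false + ψ true false * ψ true true) / Pneq -
        (ψ true true * (ψ true false + ψ false false) + ψ true false * (ψ true true + ψ false true)) / Pneq *
          (((ψ true true + ψ false true) * ψ true false + (ψ true false + ψ false false) * ψ true true) / Pneq) =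
      -((p11 * (1 - pZ) - p10 * pZ) ^ 2) / (2 * pZ * (1 - pZ)) ^ 2 := by
    rw [hP, hp11, hp10, hq, h1]
    field_simp
    ring
  refine ⟨main, ?_⟩
  rw [main, neg_div]
  simp only [neg_nonpos]
  positivity
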